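/- The order-3 Thue-Morse autocorrelation vanishes identically: for all m, n ∈ ℕ, lim_{N→∞} (1/N) Σ_{i=0}^{N-1} σ(i)σ(i+m)σ(i+n) = 0. -/

import Mathlib

open Filter Finset

/-- Binary digit-sum of `n`. -/
def digitSum (n : ℕ) : ℕ := (Nat.digits 2 n).sum

/-- The Thue-Morse sign sequence `σ(n) = (-1)^{s(n)}`. -/
def tmSign (n : ℕ) : ℤ := (-1) ^ digitSum n

lemma tmSign_zero : tmSign 0 = 1 := by simp [tmSign, digitSum]

lemma tmSign_two_mul (j : ℕ) : tmSign (2 * j) = tmSign j := by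
  rcases Nat.eq_zero_or_pos j with rfl | hj
  · simp
  · have h : Nat.digits 2 (2 * j) = 0 :: Nat.digits 2 j := by
      rw [Nat.digits_def' (by norm_num) (by omega)]
      congr 1
      · omega
      · congr 1; omega
    simp [tmSign, digitSum, h]

lemma tmSign_two_mul_add_one (j : ℕ) : tmSign (2 * j + 1) = -tmSign j := by
  have h : Nat.digits 2 (2 * j + 1) = 1 :: Nat.digits 2 j := by
    rw [Nat.digits_def' (by norm_num) (by omega)]
    congr 1
    · omega
    · congr 1; omega
  rw [tmSign, digitSum, h, List.sum_cons, pow_add, pow_one, tmSign, digitSum]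
  ring

lemma tmSign_sq (n : ℕ) : tmSign n * tmSign n = 1 := by
  rw [tmSign, ← pow_add]
  exact Even.neg_one_pow ⟨digitSum n, rfl⟩

lemma tmSign_abs (n : ℕ) : |tmSign n| = 1 := by
  rw [tmSign, abs_pow, abs_neg, abs_one, one_pow]

/-- sign depending on parity -/
def parSign (m : ℕ) : ℤ := if Even m then 1 else -1

lemma em_abs (m : ℕ) : |parSign m| = 1 := by unfold parSign; split <;> norm_num

lemma tmSign_two_mul_add (j m : ℕ) :
    tmSign (2 * j + m) = parSign m * tmSign (j + m / 2) := by
  rcases Nat.even_or_odd m with ⟨a, rfl⟩ | ⟨a, rfl⟩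
  · have h1 : 2 * j + (a + a) = 2 * (j + a) := by ring
    have h2 : (a + a) / 2 = a := by omega
    rw [h1, tmSign_two_mul, h2, parSign, if_pos ⟨a, rfl⟩, one_mul]
  · have h1 : 2 * j + (2 * a + 1) = 2 * (j + a) + 1 := by ring
    have h2 : (2 * a + 1) / 2 = a := by omega
    rw [h1, tmSign_two_mul_add_one, h2, parSign, if_neg (by simp [Nat.even_add_one, parity_simps])]
    ring

lemma tmSign_two_mul_add_one_add (j m : ℕ) :
    tmSign (2 * j + 1 + m) = -parSign m * tmSign (j + (m + 1) / 2) := by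
  rcases Nat.even_or_odd m with ⟨a, rfl⟩ | ⟨a, rfl⟩
  · have h1 : 2 * j + 1 + (a + a) = 2 * (j + a) + 1 := by ring
    have h2 : (a + a + 1) / 2 = a := by omega
    rw [h1, tmSign_two_mul_add_one, h2, parSign, if_pos ⟨a, rfl⟩]
    ring
  · have h1 : 2 * j + 1 + (2 * a + 1) = 2 * (j + a + 1) := by ring
    have h2 : (2 * a + 1 + 1) / 2 = a + 1 := by omega
    rw [h1, tmSign_two_mul, h2, parSign, if_neg (by simp [Nat.even_add_one, parity_simps])]
    ring_nf

/-- The triple correlation partial sum, over the integers. -/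
def Fz (m n N : ℕ) : ℤ :=
  ∑ i ∈ range N, tmSign i * tmSign (i + m) * tmSign (i + n)

lemma sum_range_two_mul (f : ℕ → ℤ) (N : ℕ) :
    ∑ i ∈ range (2 * N), f i = ∑ j ∈ range N, (f (2 * j) + f (2 * j + 1)) := by
  induction N with
  | zero => simp
  | succ K ih =>
    rw [show 2 * (K + 1) = 2 * K + 1 + 1 by ring, Finset.sum_range_succ,
      Finset.sum_range_succ, Finset.sum_range_succ, ih]
    ring

lemma Fz_two_mul (m n N : ℕ) :
    Fz m n (2 * N) =
      parSign m * parSign n * (Fz (m / 2) (n / 2) N - Fz ((m + 1) / 2) ((n + 1) / 2) N) := by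
  unfold Fz
  rw [sum_range_two_mul, mul_sub, Finset.mul_sum, Finset.mul_sum, ← Finset.sum_sub_distrib]
  refine Finset.sum_congr rfl fun j _ => ?_
  rw [tmSign_two_mul, tmSign_two_mul_add j m, tmSign_two_mul_add j n,
    tmSign_two_mul_add_one j, tmSign_two_mul_add_one_add j m, tmSign_two_mul_add_one_add j n]
  ring

lemma Fz_succ (m n N : ℕ) :
    Fz m n (N + 1) = Fz m n N + tmSign N * tmSign (N + m) * tmSign (N + n) := by
  unfold Fz; rw [Finset.sum_range_succ]

lemma Fz_step (m n N : ℕ) :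
    |Fz m n (2 * N)| ≤ |Fz (m / 2) (n / 2) N| + |Fz ((m + 1) / 2) ((n + 1) / 2) N| := by
  rw [Fz_two_mul, abs_mul, abs_mul, em_abs, em_abs, one_mul, one_mul]
  exact abs_sub _ _

lemma S_two_mul (N : ℕ) : ∑ i ∈ range (2 * N), tmSign i = 0 := by
  rw [sum_range_two_mul]
  simp [tmSign_two_mul, tmSign_two_mul_add_one]

lemma S_bound (N : ℕ) : |∑ i ∈ range N, tmSign i| ≤ 1 := by
  rcases Nat.even_or_odd N with ⟨K, rfl⟩ | ⟨K, rfl⟩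
  · rw [show K + K = 2 * K by ring, S_two_mul]; norm_num
  · rw [show 2 * K + 1 = 2 * K + 1 by rfl, Finset.sum_range_succ, S_two_mul, zero_add]
    rw [tmSign_abs]

lemma Fz_bounded : ∀ M m n : ℕ, m ≤ M → n ≤ M → ∃ C : ℤ, ∀ N, |Fz m n N| ≤ C := by
  intro M
  induction M using Nat.strong_induction_on with
  | _ M ih =>
    intro m n hm hn
    by_cases hsmall : m ≤ 1 ∧ n ≤ 1
    · obtain ⟨hm1, hn1⟩ := hsmall
      refine ⟨2, ?_⟩
      intro N
      interval_cases m <;> interval_cases n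
      · -- (0,0)
        have h : Fz 0 0 N = ∑ i ∈ range N, tmSign i := by
          unfold Fz
          refine Finset.sum_congr rfl fun i _ => ?_
          rw [add_zero, tmSign_sq, one_mul]
        rw [h]; linarith [S_bound N]
      · -- (0,1)
        have h : Fz 0 1 N = (∑ i ∈ range (N + 1), tmSign i) - 1 := by
          unfold Fz
          rw [Finset.sum_range_succ' (fun i => tmSign i) N, tmSign_zero]
          have : ∀ i, tmSign i * tmSign (i + 0) * tmSign (i + 1) = tmSign (i + 1) := by
            intro i; rw [add_zero, tmSign_sq, one_mul]
          rw [Finset.sum_congr rfl fun i _ => this i]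
          ring
        rw [h]
        calc |(∑ i ∈ range (N + 1), tmSign i) - 1| ≤ |∑ i ∈ range (N + 1), tmSign i| + 1 := by
              exact abs_sub _ _ |>.trans (by norm_num)
          _ ≤ 2 := by linarith [S_bound (N + 1)]
      · -- (1,0)
        have h : Fz 1 0 N = (∑ i ∈ range (N + 1), tmSign i) - 1 := by
          unfold Fz
          rw [Finset.sum_range_succ' (fun i => tmSign i) N, tmSign_zero]
          have : ∀ i, tmSign i * tmSign (i + 1) * tmSign (i + 0) = tmSign (i + 1) := by
            intro i
            rw [add_zero, show tmSign i * tmSign (i + 1) * tmSign i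
              = tmSign i * tmSign i * tmSign (i + 1) by ring, tmSign_sq, one_mul]
          rw [Finset.sum_congr rfl fun i _ => this i]
          ring
        rw [h]
        calc |(∑ i ∈ range (N + 1), tmSign i) - 1| ≤ |∑ i ∈ range (N + 1), tmSign i| + 1 := by
              exact abs_sub _ _ |>.trans (by norm_num)
          _ ≤ 2 := by linarith [S_bound (N + 1)]
      · -- (1,1)
        have h : Fz 1 1 N = ∑ i ∈ range N, tmSign i := by
          unfold Fz
          refine Finset.sum_congr rfl fun i _ => ?_
          rw [mul_assoc, tmSign_sq, mul_one]
        rw [h]; linarith [S_bound N]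
    · have hM2 : 2 ≤ M := by omega
      obtain ⟨C1, hC1⟩ := ih ((M + 1) / 2) (by omega) (m / 2) (n / 2) (by omega) (by omega)
      obtain ⟨C2, hC2⟩ :=
        ih ((M + 1) / 2) (by omega) ((m + 1) / 2) ((n + 1) / 2) (by omega) (by omega)
      refine ⟨C1 + C2 + 1, ?_⟩
      have heven : ∀ K, |Fz m n (2 * K)| ≤ C1 + C2 := fun K =>
        (Fz_step m n K).trans (add_le_add (hC1 K) (hC2 K))
      intro N
      rcases Nat.even_or_odd N with ⟨K, rfl⟩ | ⟨K, rfl⟩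
      · rw [show K + K = 2 * K by ring]
        linarith [heven K]
      · rw [Fz_succ]
        have habs : |tmSign (2 * K) * tmSign (2 * K + m) * tmSign (2 * K + n)| = 1 := by
          rw [abs_mul, abs_mul, tmSign_abs, tmSign_abs, tmSign_abs]; norm_num
        calc |Fz m n (2 * K) + tmSign (2 * K) * tmSign (2 * K + m) * tmSign (2 * K + n)|
            ≤ |Fz m n (2 * K)| + |tmSign (2 * K) * tmSign (2 * K + m) * tmSign (2 * K + n)| :=
              abs_add_le _ _
          _ ≤ C1 + C2 + 1 := by rw [habs]; linarith [heven K]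

/-- The order-3 Thue-Morse autocorrelation vanishes identically. -/
theorem tm_autocorrelation3_eq_zero (m n : ℕ) :
    Tendsto
      (fun N : ℕ => (1 / (N : ℝ)) *
        ∑ i ∈ range N, (tmSign i : ℝ) * (tmSign (i + m) : ℝ) * (tmSign (i + n) : ℝ))
      atTop (nhds 0) := by
  obtain ⟨C, hC⟩ := Fz_bounded (m ⊔ n) m n le_sup_left le_sup_right
  apply squeeze_zero_norm (a := fun N : ℕ => (C : ℝ) / N)
  · intro N
    have hcast : ∑ i ∈ range N, (tmSign i : ℝ) * (tmSign (i + m) : ℝ) * (tmSign (i + n) : ℝ)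
        = ((Fz m n N : ℤ) : ℝ) := by
      unfold Fz; push_cast; ring_nf; simp only [add_comm]
    rw [norm_mul, hcast]
    have h1 : ‖((Fz m n N : ℤ) : ℝ)‖ ≤ (C : ℝ) := by
      rw [Real.norm_eq_abs, ← Int.cast_abs]
      exact_mod_cast hC N
    have h2 : ‖(1 / (N : ℝ))‖ = 1 / (N : ℝ) := by
      rw [Real.norm_eq_abs, abs_of_nonneg (by positivity)]
    rw [h2, div_eq_mul_inv (C : ℝ), mul_comm (C : ℝ), ← one_div]
    exact mul_le_mul_of_nonneg_left h1 (by positivity)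
  · exact tendsto_const_div_atTop_nhds_zero_nat (C : ℝ)
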